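/- Let (A_n)_{n≥0} be a nonnegative stochastic process adapted to a filtration (F_n), and (b_n) a sequence in [0,1) with Σ_n b_n < ∞, such that E[A_{n+1} | F_n] ≥ (1 - b_n) A_n for all n. Then (c_n A_n)_n with c_n = Π_{k=1}^n (1 - b_k)^{-1} is a submartingale, the constants c_n converge to a finite positive limit, and if sup_n E[A_n] < ∞ then (A_n) converges almost surely. -/

import Mathlib

open MeasureTheory Filter
open scoped Topology

theorem stmt16 {Ω : Type*} [m0 : MeasurableSpace Ω] (P : Measure Ω)
    [IsProbabilityMeasure P] (ℱ : MeasureTheory.Filtration ℕ m0)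
    (A : ℕ → Ω → ℝ) (b : ℕ → ℝ)
    (hb : ∀ n, 0 ≤ b n ∧ b n < 1) (hsum : Summable b)
    (hadapted : MeasureTheory.Adapted ℱ A)
    (hnonneg : ∀ n ω, 0 ≤ A n ω)
    (hint : ∀ n, Integrable (A n) P)
    (hcond : ∀ n, (fun ω => (1 - b n) * A n ω) ≤ᵐ[P] P[A (n + 1)|ℱ n]) :
    Submartingale (fun n ω => (∏ k ∈ Finset.range n, (1 - b k)⁻¹) * A n ω) ℱ P ∧
    (∃ L : ℝ, 0 < L ∧
      Tendsto (fun n => ∏ k ∈ Finset.range n, (1 - b k)⁻¹) atTop (𝓝 L)) ∧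
    ((∃ B : ℝ, ∀ n, ∫ ω, A n ω ∂P ≤ B) →
      ∀ᵐ ω ∂P, ∃ l : ℝ, Tendsto (fun n => A n ω) atTop (𝓝 l)) := by
  set c : ℕ → ℝ := fun n => ∏ k ∈ Finset.range n, (1 - b k)⁻¹ with hc
  have hpos : ∀ k, 0 < 1 - b k := fun k => by linarith [(hb k).2]
  have hcpos : ∀ n, 0 < c n := fun n =>
    Finset.prod_pos fun k _ => inv_pos.2 (hpos k)
  have hfac1 : ∀ k, (1 : ℝ) ≤ (1 - b k)⁻¹ := fun k =>
    (one_le_inv₀ (hpos k)).2 (by linarith [(hb k).1])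
  have hsucc : ∀ n, c (n + 1) = c n * (1 - b n)⁻¹ := fun n =>
    Finset.prod_range_succ _ n
  have hmono : Monotone c := by
    apply monotone_nat_of_le_succ
    intro n
    rw [hsucc n]
    nlinarith [hcpos n, hfac1 n]
  have hc1 : ∀ n, (1 : ℝ) ≤ c n := fun n => by
    have := hmono (Nat.zero_le n)
    simpa [hc] using this
  -- summability of g
  set g : ℕ → ℝ := fun k => b k / (1 - b k) with hg
  have hg0 : ∀ k, 0 ≤ g k := fun k => div_nonneg (hb k).1 (hpos k).le
  have hgsum : Summable g := by
    have hb0 : Tendsto b atTop (𝓝 0) := hsum.tendsto_atTop_zero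
    obtain ⟨N, hN⟩ := (hb0.eventually (eventually_le_nhds (by norm_num : (0:ℝ) < 1/2))).exists_forall_of_atTop
    rw [← summable_nat_add_iff N]
    apply Summable.of_nonneg_of_le (fun k => hg0 _) (fun k => ?_)
      (((summable_nat_add_iff N).2 hsum).mul_left 2)
    have h2 : b (k + N) ≤ 1/2 := hN (k + N) (Nat.le_add_left _ _)
    rw [hg, div_le_iff₀ (hpos _)]
    nlinarith [(hb (k + N)).1]
  -- bound on c
  have hcbound : ∀ n, c n ≤ Real.exp (∑' k, g k) := by
    intro n
    have h1 : c n ≤ ∏ k ∈ Finset.range n, Real.exp (g k) := by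
      apply Finset.prod_le_prod (fun k _ => (inv_pos.2 (hpos k)).le)
      intro k _
      have hkey : (1 - b k) * (1 + g k) = 1 := by
        rw [hg]; field_simp [(hpos k).ne']; ring
      have h2 : (1 - b k)⁻¹ ≤ 1 + g k := by
        rw [inv_eq_one_div, div_le_iff₀ (hpos k)]
        nlinarith [hkey]
      linarith [Real.add_one_le_exp (g k)]
    rw [← Real.exp_sum] at h1
    exact h1.trans (Real.exp_le_exp.2 (Summable.sum_le_tsum _ (fun k _ => hg0 k) hgsum))
  have hbdd : BddAbove (Set.range c) := ⟨Real.exp (∑' k, g k), by rintro _ ⟨n, rfl⟩; exact hcbound n⟩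
  set L : ℝ := ⨆ n, c n with hL
  have hcL : Tendsto c atTop (𝓝 L) := tendsto_atTop_ciSup hmono hbdd
  have hLpos : 0 < L := lt_of_lt_of_le one_pos ((hc1 0).trans (le_ciSup hbdd 0))
  have hcleL : ∀ n, c n ≤ L := fun n => le_ciSup hbdd n
  -- submartingale
  have hsub : Submartingale (fun n ω => c n * A n ω) ℱ P := by
    apply submartingale_nat
    · exact fun n => ((hadapted n).const_mul (c n)).stronglyMeasurable
    · exact fun n => (hint n).const_mul (c n)
    · intro n
      have h1 : P[fun ω => c (n+1) * A (n+1) ω|ℱ n] =ᵐ[P] fun ω => c (n+1) * (P[A (n+1)|ℱ n]) ω := by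
        have := condExp_smul (μ := P) (m := ℱ n) (c (n+1)) (A (n+1))
        filter_upwards [this] with ω hω
        show P[c (n+1) • A (n+1)|ℱ n] ω = _
        simpa using hω
      filter_upwards [h1, hcond n] with ω hω h2
      rw [hω]
      calc c n * A n ω = c (n+1) * ((1 - b n) * A n ω) := by
            rw [hsucc n, mul_assoc, ← mul_assoc (1 - b n)⁻¹, inv_mul_cancel₀ (hpos n).ne', one_mul]
        _ ≤ c (n+1) * (P[A (n+1)|ℱ n]) ω :=
            mul_le_mul_of_nonneg_left h2 (hcpos (n+1)).le
  refine ⟨hsub, ⟨L, hLpos, hcL⟩, ?_⟩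
  rintro ⟨B, hB⟩
  have hB0 : 0 ≤ B := le_trans (integral_nonneg (hnonneg 0)) (hB 0)
  have hbd : ∀ n, eLpNorm (fun ω => c n * A n ω) 1 P ≤ ENNReal.ofReal (L * B) := by
    intro n
    have hi : Integrable (fun ω => c n * A n ω) P := (hint n).const_mul (c n)
    rw [eLpNorm_one_eq_lintegral_enorm, ← ofReal_integral_norm_eq_lintegral_enorm hi]
    apply ENNReal.ofReal_le_ofReal
    have : ∫ ω, ‖c n * A n ω‖ ∂P = c n * ∫ ω, A n ω ∂P := by
      rw [← integral_const_mul]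
      congr 1
      ext ω
      rw [Real.norm_of_nonneg (mul_nonneg (hcpos n).le (hnonneg n ω))]
    rw [this]
    exact mul_le_mul (hcleL n) (hB n) (integral_nonneg (hnonneg n)) hLpos.le
  have hconv := hsub.exists_ae_tendsto_of_bdd hbd
  filter_upwards [hconv] with ω ⟨l, hl⟩
  refine ⟨L⁻¹ * l, ?_⟩
  have : Tendsto (fun n => (c n)⁻¹ * (c n * A n ω)) atTop (𝓝 (L⁻¹ * l)) :=
    ((hcL.inv₀ hLpos.ne').mul hl)
  convert this using 2 with n
  rw [← mul_assoc, inv_mul_cancel₀ (hcpos n).ne', one_mul]
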